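/- Let (α_t)_{t∈I} be a finite family of pairwise disjoint subsets of {1,…,n} with |α_t| = k_t and |I| = N, and suppose every α_t is stable for the n×n real matrix W. Then the number of pairs (i,j) with w_{ij} > 0 is at least Σ_{t∈I} k_t, and the number of pairs (i,j) with w_{ij} < 0 is at least n·N − Σ_{t∈I} k_t. -/

import Mathlib

open Finset

/-- Signature of a set: `+1` on `α`, `-1` off `α`. -/
def sgn {n : ℕ} (α : Finset (Fin n)) (i : Fin n) : ℝ := if i ∈ α then 1 else -1

/-- `α` is a stable set for the weight matrix `W`. -/
def IsStable {n : ℕ} (W : Matrix (Fin n) (Fin n) ℝ) (α : Finset (Fin n)) : Prop :=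
  ∀ i, 0 < sgn α i * ∑ j ∈ α, W i j

/-- If a mutually disjoint family of sets of sizes `k_t` is stable for `W`, then the
number of positive entries of `W` is at least `Σ_t k_t` and the number of negative
entries is at least `n·|I| - Σ_t k_t`. -/
theorem stmt4 (n : ℕ) (W : Matrix (Fin n) (Fin n) ℝ)
    (ι : Type) [Fintype ι] (A : ι → Finset (Fin n))
    (hdisj : ∀ s t : ι, s ≠ t → Disjoint (A s) (A t))
    (hstab : ∀ t : ι, IsStable W (A t)) :
    (∑ t : ι, (A t).card) ≤
        ((Finset.univ : Finset (Fin n × Fin n)).filter fun p => 0 < W p.1 p.2).card ∧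
    n * Fintype.card ι - (∑ t : ι, (A t).card) ≤
        ((Finset.univ : Finset (Fin n × Fin n)).filter fun p => W p.1 p.2 < 0).card := by
  classical
  set Pos := ((Finset.univ : Finset (Fin n × Fin n)).filter fun p => 0 < W p.1 p.2) with hPos
  set Neg := ((Finset.univ : Finset (Fin n × Fin n)).filter fun p => W p.1 p.2 < 0) with hNeg
  -- sub-families
  set P : ι → Finset (Fin n × Fin n) := fun t => Pos.filter fun p => p.2 ∈ A t with hP
  set Nn : ι → Finset (Fin n × Fin n) := fun t => Neg.filter fun p => p.2 ∈ A t with hN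
  have hPdisj : ∀ s ∈ (univ : Finset ι), ∀ t ∈ (univ : Finset ι), s ≠ t →
      Disjoint (P s) (P t) := by
    intro s _ t _ hst
    refine Finset.disjoint_left.2 ?_
    intro p hp hq
    simp only [hP, Finset.mem_filter] at hp hq
    exact Finset.disjoint_left.1 (hdisj s t hst) hp.2 hq.2
  have hNdisj : ∀ s ∈ (univ : Finset ι), ∀ t ∈ (univ : Finset ι), s ≠ t →
      Disjoint (Nn s) (Nn t) := by
    intro s _ t _ hst
    refine Finset.disjoint_left.2 ?_
    intro p hp hq
    simp only [hN, Finset.mem_filter] at hp hq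
    exact Finset.disjoint_left.1 (hdisj s t hst) hp.2 hq.2
  have hcardP : ∀ t : ι, (A t).card ≤ (P t).card := by
    intro t
    have hex : ∀ i ∈ A t, ∃ j ∈ A t, 0 < W i j := by
      intro i hi
      have h := hstab t i
      rw [sgn, if_pos hi, one_mul] at h
      by_contra hcon
      push_neg at hcon
      have : ∑ j ∈ A t, W i j ≤ 0 := Finset.sum_nonpos fun j hj => hcon j hj
      linarith
    choose f hf1 hf2 using hex
    apply Finset.card_le_card_of_injOn (fun i => if h : i ∈ A t then (i, f i h) else (i, i))
    · intro i hi
      simp only [Finset.mem_coe] at hi ⊢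
      rw [dif_pos hi]
      simp only [hP, hPos, Finset.mem_filter, Finset.mem_univ, true_and]
      exact ⟨hf2 i hi, hf1 i hi⟩
    · intro a ha b hb hab
      simp only [Finset.mem_coe] at ha hb
      simp only [dif_pos ha, dif_pos hb] at hab
      exact congrArg Prod.fst hab
  have hcardN : ∀ t : ι, n - (A t).card ≤ (Nn t).card := by
    intro t
    have hex : ∀ i ∈ (A t)ᶜ, ∃ j ∈ A t, W i j < 0 := by
      intro i hi
      rw [Finset.mem_compl] at hi
      have h := hstab t i
      rw [sgn, if_neg hi, neg_one_mul, neg_pos] at h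
      by_contra hcon
      push_neg at hcon
      have : (0:ℝ) ≤ ∑ j ∈ A t, W i j := Finset.sum_nonneg fun j hj => hcon j hj
      linarith
    choose f hf1 hf2 using hex
    have hc : n - (A t).card = ((A t)ᶜ : Finset (Fin n)).card := by
      rw [Finset.card_compl, Fintype.card_fin]
    rw [hc]
    apply Finset.card_le_card_of_injOn (fun i => if h : i ∈ (A t)ᶜ then (i, f i h) else (i, i))
    · intro i hi
      simp only [Finset.mem_coe] at hi ⊢
      rw [dif_pos hi]
      simp only [hN, hNeg, Finset.mem_filter, Finset.mem_univ, true_and]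
      exact ⟨hf2 i hi, hf1 i hi⟩
    · intro a ha b hb hab
      simp only [Finset.mem_coe] at ha hb
      simp only [dif_pos ha, dif_pos hb] at hab
      exact congrArg Prod.fst hab
  have hsubP : (univ : Finset ι).biUnion P ⊆ Pos := by
    intro p hp
    rcases Finset.mem_biUnion.1 hp with ⟨t, _, ht⟩
    exact (Finset.mem_filter.1 ht).1
  have hsubN : (univ : Finset ι).biUnion Nn ⊆ Neg := by
    intro p hp
    rcases Finset.mem_biUnion.1 hp with ⟨t, _, ht⟩
    exact (Finset.mem_filter.1 ht).1
  have h1 : (∑ t : ι, (A t).card) ≤ Pos.card := by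
    calc ∑ t : ι, (A t).card ≤ ∑ t : ι, (P t).card := Finset.sum_le_sum fun t _ => hcardP t
    _ = ((univ : Finset ι).biUnion P).card := (Finset.card_biUnion hPdisj).symm
    _ ≤ Pos.card := Finset.card_le_card hsubP
  refine ⟨h1, ?_⟩
  have h2 : (∑ t : ι, (n - (A t).card)) ≤ Neg.card := by
    calc ∑ t : ι, (n - (A t).card) ≤ ∑ t : ι, (Nn t).card :=
        Finset.sum_le_sum fun t _ => hcardN t
    _ = ((univ : Finset ι).biUnion Nn).card := (Finset.card_biUnion hNdisj).symm
    _ ≤ Neg.card := Finset.card_le_card hsubN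
  refine le_trans ?_ h2
  rw [Nat.sub_le_iff_le_add]
  rw [← Finset.sum_add_distrib]
  have : ∀ t : ι, n - (A t).card + (A t).card = n := by
    intro t
    exact Nat.sub_add_cancel (by simpa using Finset.card_le_card (Finset.subset_univ (A t)))
  rw [Finset.sum_congr rfl fun t _ => this t]
  simp [Finset.sum_const, mul_comm]
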